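/- For every topological space X and every subset A of X, the θ-closed hull of A satisfies |[A]_θ| ≤ (|A| · nu(X))^{κ(X)}. -/

import Mathlib

open Set Topology Cardinal

universe u

variable {X : Type u}

/-- The θ-closure of a set. -/
def thetaCl [TopologicalSpace X] (A : Set X) : Set X :=
  {x | ∀ U : Set X, IsOpen U → x ∈ U → (closure U ∩ A).Nonempty}

/-- The θ-closed hull of a set. -/
def thetaHull [TopologicalSpace X] (A : Set X) : Set X :=
  ⋂₀ {C : Set X | thetaCl C = C ∧ A ⊆ C}

/-- A nonempty set is finitely non-Urysohn if every finite choice of closed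
neighborhoods (closures of open neighborhoods) of finitely many of its points
has nonempty intersection. -/
def FinNonUrysohn [TopologicalSpace X] (A : Set X) : Prop :=
  A.Nonempty ∧ ∀ F : Set X, F ⊆ A → F.Nonempty → F.Finite →
    ∀ U : X → Set X, (∀ x ∈ F, IsOpen (U x) ∧ x ∈ U x) →
      (⋂ x ∈ F, closure (U x)).Nonempty

/-- The non-Urysohn number `nu(X)`. -/
noncomputable def nuNumber (X : Type u) [TopologicalSpace X] : Cardinal.{u} :=
  1 + ⨆ A : {A : Set X // FinNonUrysohn A}, #↥A.1

/-- The Urysohn number `U(X)`. -/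
noncomputable def UrysohnNumber (X : Type u) [TopologicalSpace X] : Cardinal.{u} :=
  sInf {κ : Cardinal.{u} | ∀ A : Set X, κ ≤ #↥A → ∃ U : X → Set X,
    (∀ a ∈ A, IsOpen (U a) ∧ a ∈ U a) ∧ (⋂ a ∈ A, closure (U a)) = ∅}

/-- The cardinal function `κ(X)`: the smallest infinite cardinal such that each
point has a family of at most that many closed neighborhoods cofinal (under
reverse inclusion) in the closures of its open neighborhoods. -/
noncomputable def kappaInv (X : Type u) [TopologicalSpace X] : Cardinal.{u} :=
  sInf {κ : Cardinal.{u} | ℵ₀ ≤ κ ∧ ∀ x : X, ∃ V : Set (Set X), #↥V ≤ κ ∧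
    (∀ W ∈ V, IsClosed W ∧ W ∈ nhds x) ∧
    ∀ U : Set X, IsOpen U → x ∈ U → ∃ W ∈ V, W ⊆ closure U}

/-- The character `χ(X)`. -/
noncomputable def chiChar (X : Type u) [TopologicalSpace X] : Cardinal.{u} :=
  sInf {κ : Cardinal.{u} | ℵ₀ ≤ κ ∧ ∀ x : X, ∃ B : Set (Set X), #↥B ≤ κ ∧
    (∀ U ∈ B, U ∈ nhds x) ∧ ∀ S ∈ nhds x, ∃ U ∈ B, U ⊆ S}

/-- The θ-density `d_θ(X)`. -/
noncomputable def dTheta (X : Type u) [TopologicalSpace X] : Cardinal.{u} :=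
  sInf {c : Cardinal.{u} | ∃ A : Set X, thetaCl A = Set.univ ∧ #↥A = c}

/-- The cardinal function `sL_θ(X)`. -/
noncomputable def sLtheta (X : Type u) [TopologicalSpace X] : Cardinal.{u} :=
  sInf {τ : Cardinal.{u} | ℵ₀ ≤ τ ∧ ∀ A : Set X, ∀ 𝒰 : Set (Set X),
    (∀ U ∈ 𝒰, IsOpen U) → thetaCl A ⊆ ⋃₀ 𝒰 →
    ∃ 𝒱 ⊆ 𝒰, #↥𝒱 ≤ τ ∧ A ⊆ closure (⋃₀ 𝒱)}

/-- The cardinal function `wL_c(X)`. -/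
noncomputable def wLc (X : Type u) [TopologicalSpace X] : Cardinal.{u} :=
  sInf {τ : Cardinal.{u} | ℵ₀ ≤ τ ∧ ∀ A : Set X, IsClosed A → ∀ 𝒰 : Set (Set X),
    (∀ U ∈ 𝒰, IsOpen U) → A ⊆ ⋃₀ 𝒰 →
    ∃ 𝒱 ⊆ 𝒰, #↥𝒱 ≤ τ ∧ A ⊆ closure (⋃₀ 𝒱)}

/-- The almost Lindelöf degree `aL(X)`. -/
noncomputable def aLdeg (X : Type u) [TopologicalSpace X] : Cardinal.{u} :=
  sInf {τ : Cardinal.{u} | ℵ₀ ≤ τ ∧ ∀ 𝒰 : Set (Set X),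
    (∀ U ∈ 𝒰, IsOpen U) → ⋃₀ 𝒰 = Set.univ →
    ∃ 𝒱 ⊆ 𝒰, #↥𝒱 ≤ τ ∧ (⋃ V ∈ 𝒱, closure V) = Set.univ}

/-- `X` is a Urysohn space: distinct points have open neighborhoods with
disjoint closures. -/
def UrysohnSpace (X : Type u) [TopologicalSpace X] : Prop :=
  ∀ x y : X, x ≠ y → ∃ U V : Set X, IsOpen U ∧ IsOpen V ∧ x ∈ U ∧ y ∈ V ∧
    closure U ∩ closure V = ∅

/-- For a set `S`, the intersection over all choices of closed neighborhoods of
the points of `S` of the θ-closures of the intersections of the choices. -/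
def capSet [TopologicalSpace X] (S : Set X) : Set X :=
  {y | ∀ U : X → Set X, (∀ a ∈ S, IsOpen (U a) ∧ a ∈ U a) →
    y ∈ thetaCl (⋂ a ∈ S, closure (U a))}

/-- For a set `M`, the intersection over all nonempty finite `F ⊆ M` and all
choices of open neighborhoods of points of `F` of
`cl_θ(⋂_{x∈F} closure (U x))`. -/
def fnuCap [TopologicalSpace X] (M : Set X) : Set X :=
  {y | ∀ F : Set X, F ⊆ M → F.Nonempty → F.Finite → ∀ U : X → Set X,
    (∀ x ∈ F, IsOpen (U x) ∧ x ∈ U x) →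
    y ∈ thetaCl (⋂ x ∈ F, closure (U x))}

lemma subset_thetaCl' [TopologicalSpace X] (A : Set X) : A ⊆ thetaCl A :=
  fun x hx U _ hxU => ⟨x, subset_closure hxU, hx⟩

lemma thetaCl_mono' [TopologicalSpace X] {A B : Set X} (h : A ⊆ B) : thetaCl A ⊆ thetaCl B := by
  intro x hx U hU hxU
  obtain ⟨y, hy1, hy2⟩ := hx U hU hxU
  exact ⟨y, hy1, h hy2⟩

lemma thetaCl_empty' [TopologicalSpace X] : thetaCl (∅ : Set X) = ∅ := by
  ext x
  simp only [thetaCl, mem_setOf_eq, mem_empty_iff_false, iff_false]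
  intro h
  obtain ⟨y, -, hy⟩ := h univ isOpen_univ (mem_univ x)
  exact hy

lemma closed_nhd_meets [TopologicalSpace X] {B : Set X} {x : X} (hx : x ∈ thetaCl B)
    {W : Set X} (hWc : IsClosed W) (hWn : W ∈ nhds x) : (W ∩ B).Nonempty := by
  obtain ⟨U, hUW, hU, hxU⟩ := mem_nhds_iff.mp hWn
  obtain ⟨y, hy1, hy2⟩ := hx U hU hxU
  exact ⟨y, by
    have : closure U ⊆ W := hWc.closure_subset_iff.mpr hUW
    exact this hy1, hy2⟩

noncomputable def chainB {X : Type u} [TopologicalSpace X] (A : Set X) {o : Ordinal.{u}} :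
    o.ToType → Set X :=
  (IsWellFounded.wf (α := o.ToType) (r := (· < ·))).fix
    (fun i rec => thetaCl (A ∪ ⋃ j : {j // j < i}, rec j.1 j.2))

lemma chainB_eq {X : Type u} [TopologicalSpace X] (A : Set X) {o : Ordinal.{u}} (i : o.ToType) :
    chainB A i = thetaCl (A ∪ ⋃ j : {j : o.ToType // j < i}, chainB A j.1) := by
  rw [chainB, WellFounded.fix_eq]


lemma kappaInv_spec (X : Type u) [TopologicalSpace X] :
    ℵ₀ ≤ kappaInv X ∧ ∀ x : X, ∃ V : Set (Set X), #↥V ≤ kappaInv X ∧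
    (∀ W ∈ V, IsClosed W ∧ W ∈ nhds x) ∧
    ∀ U : Set X, IsOpen U → x ∈ U → ∃ W ∈ V, W ⊆ closure U := by
  have hne : {κ : Cardinal.{u} | ℵ₀ ≤ κ ∧ ∀ x : X, ∃ V : Set (Set X), #↥V ≤ κ ∧
      (∀ W ∈ V, IsClosed W ∧ W ∈ nhds x) ∧
      ∀ U : Set X, IsOpen U → x ∈ U → ∃ W ∈ V, W ⊆ closure U}.Nonempty := by
    refine ⟨max ℵ₀ #(Set X), le_max_left _ _, fun x => ?_⟩
    refine ⟨{W | ∃ U : Set X, IsOpen U ∧ x ∈ U ∧ W = closure U},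
      (mk_set_le _).trans (le_max_right _ _), ?_, ?_⟩
    · rintro W ⟨U, hU, hxU, rfl⟩
      exact ⟨isClosed_closure, mem_nhds_iff.mpr ⟨U, subset_closure, hU, hxU⟩⟩
    · intro U hU hxU
      exact ⟨closure U, ⟨U, hU, hxU, rfl⟩, subset_rfl⟩
  exact csInf_mem hne

lemma mk_le_nuNumber [TopologicalSpace X] {S : Set X} (hS : FinNonUrysohn S) :
    #↥S ≤ nuNumber X := by
  have h1 : #↥S ≤ ⨆ A : {A : Set X // FinNonUrysohn A}, #↥A.1 :=
    le_ciSup (Cardinal.bddAbove_range _) (⟨S, hS⟩ : {A : Set X // FinNonUrysohn A})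
  exact h1.trans (le_add_self)

lemma two_le_nuNumber [TopologicalSpace X] (hX : Nonempty X) : 2 ≤ nuNumber X := by
  obtain ⟨x⟩ := hX
  have hfnu : FinNonUrysohn ({x} : Set X) := by
    refine ⟨singleton_nonempty x, fun F hF hFne hFfin U hU => ?_⟩
    refine ⟨x, mem_iInter₂.mpr fun y hy => ?_⟩
    have hyx : y = x := hF hy
    subst hyx
    exact subset_closure (hU y hy).2
  have h1 : (1 : Cardinal) ≤ ⨆ A : {A : Set X // FinNonUrysohn A}, #↥A.1 := by
    have := le_ciSup (Cardinal.bddAbove_range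
      (fun A : {A : Set X // FinNonUrysohn A} => #↥A.1)) (⟨{x}, hfnu⟩ : {A : Set X // FinNonUrysohn A})
    simpa using this
  have : (2 : Cardinal) = 1 + 1 := by norm_num
  rw [this, nuNumber]
  exact add_le_add le_rfl h1


lemma thetaCl_card_le [TopologicalSpace X] (B : Set X) {κ : Cardinal.{u}} (hκ : ℵ₀ ≤ κ)
    (V : X → Set (Set X)) (hVκ : ∀ x, #↥(V x) ≤ κ)
    (hVcl : ∀ x, ∀ W ∈ V x, IsClosed W ∧ W ∈ nhds x)
    (hVcof : ∀ x, ∀ U : Set X, IsOpen U → x ∈ U → ∃ W ∈ V x, W ⊆ closure U) :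
    #↥(thetaCl B) ≤ #↥B ^ κ * nuNumber X := by
  rcases (thetaCl B).eq_empty_or_nonempty with hemp | hne
  · rw [hemp]; simp
  have hBne : B.Nonempty := by
    obtain ⟨x, hx⟩ := hne
    obtain ⟨y, -, hy⟩ := hx univ isOpen_univ (mem_univ x)
    exact ⟨y, hy⟩
  haveI : Nonempty ↥B := hBne.to_subtype
  classical
  set K := κ.out with hK
  haveI : Infinite K := Cardinal.infinite_iff.mpr (by rw [hK, mk_out]; exact hκ)
  have hVne : ∀ x : X, Nonempty ↥(V x) := fun x => by
    obtain ⟨W, hW, -⟩ := hVcof x univ isOpen_univ (mem_univ x)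
    exact ⟨⟨W, hW⟩⟩
  have hsurj : ∀ x : X, ∃ e : K → ↥(V x), Function.Surjective e := by
    intro x
    haveI := hVne x
    obtain ⟨f⟩ := (Cardinal.le_def _ _).mp ((hVκ x).trans_eq (mk_out κ).symm)
    exact ⟨Function.invFun f, Function.invFun_surjective f.injective⟩
  choose e he using hsurj
  have hq : ∀ (x : ↥(thetaCl B)) (s : Finset K), ∃ b : ↥B,
      (b : X) ∈ ⋂ k ∈ s, ((e x.1 k : Set X)) := by
    intro x s
    have hcl : IsClosed (⋂ k ∈ s, (e x.1 k : Set X)) :=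
      isClosed_biInter fun k _ => (hVcl x.1 (e x.1 k).1 (e x.1 k).2).1
    have hnh : (⋂ k ∈ s, (e x.1 k : Set X)) ∈ nhds x.1 :=
      (Filter.biInter_finset_mem s).mpr fun k _ => (hVcl x.1 (e x.1 k).1 (e x.1 k).2).2
    obtain ⟨b, hb1, hb2⟩ := closed_nhd_meets x.2 hcl hnh
    exact ⟨⟨b, hb2⟩, hb1⟩
  choose q hqmem using hq
  have hfib : ∀ g : Finset K → ↥B, #↥(q ⁻¹' {g}) ≤ nuNumber X := by
    intro g
    rcases (q ⁻¹' {g}).eq_empty_or_nonempty with h0 | hne'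
    · rw [h0]; simp
    rw [← mk_image_eq (f := (Subtype.val : ↥(thetaCl B) → X)) Subtype.val_injective]
    apply mk_le_nuNumber
    refine ⟨hne'.image _, fun F hF hFne hFfin U hU => ?_⟩
    have hmem : ∀ y ∈ F, ∃ hy : y ∈ thetaCl B, q ⟨y, hy⟩ = g := by
      intro y hy
      obtain ⟨x, hx, rfl⟩ := hF hy
      exact ⟨x.2, hx⟩
    have hkex : ∀ y ∈ F, ∃ k : K, ((e y k : Set X)) ⊆ closure (U y) := by
      intro y hy
      obtain ⟨W, hW, hWsub⟩ := hVcof y (U y) (hU y hy).1 (hU y hy).2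
      obtain ⟨kk, hkk⟩ := he y ⟨W, hW⟩
      exact ⟨kk, by rw [hkk]; exact hWsub⟩
    choose! k hksub using hkex
    set s : Finset K := hFfin.toFinset.image k with hs
    refine ⟨(g s : X), mem_iInter₂.mpr fun y hy => ?_⟩
    obtain ⟨hy', hqy⟩ := hmem y hy
    have h1 : (q ⟨y, hy'⟩ s : X) ∈ ⋂ k' ∈ s, ((e y k' : Set X)) := hqmem ⟨y, hy'⟩ s
    rw [hqy] at h1
    have hks : k y ∈ s := Finset.mem_image_of_mem k (hFfin.mem_toFinset.mpr hy)
    exact hksub y hy (mem_iInter₂.mp h1 (k y) hks)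
  calc #↥(thetaCl B) = #(Σ g : Finset K → ↥B, ↥(q ⁻¹' {g})) :=
        (mk_congr (Equiv.sigmaFiberEquiv q)).symm
    _ = Cardinal.sum (fun g : Finset K → ↥B => #↥(q ⁻¹' {g})) := mk_sigma _
    _ ≤ Cardinal.sum (fun _ : Finset K → ↥B => nuNumber X) := sum_le_sum _ _ hfib
    _ = #(Finset K → ↥B) * nuNumber X := sum_const' _ _
    _ = #↥B ^ κ * nuNumber X := by rw [← power_def, mk_finset_of_infinite, hK, mk_out]


theorem statement7 [TopologicalSpace X] (A : Set X) :
    #↥(thetaHull A) ≤ (#↥A * nuNumber X) ^ kappaInv X := by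
  classical
  rcases A.eq_empty_or_nonempty with rfl | hA
  · have hsub : thetaHull (∅ : Set X) ⊆ (∅ : Set X) :=
      sInter_subset_of_mem ⟨thetaCl_empty', subset_rfl⟩
    rw [eq_empty_of_subset_empty hsub, mk_emptyCollection]
    exact zero_le
  haveI hXne : Nonempty X := ⟨hA.choose⟩
  obtain ⟨hκ, hVex⟩ := kappaInv_spec X
  set κ := kappaInv X with hκdef
  choose V hVκ hVcl hVcof using hVex
  set ν := nuNumber X with hνdef
  set c := (#↥A * ν) ^ κ with hc
  have hν2 : 2 ≤ ν := two_le_nuNumber hXne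
  have hA1 : 1 ≤ #↥A := Cardinal.one_le_iff_ne_zero.mpr (mk_ne_zero_iff.mpr hA.to_subtype)
  have hμ2 : 2 ≤ #↥A * ν := by
    calc (2 : Cardinal) = 1 * 2 := (one_mul 2).symm
    _ ≤ #↥A * ν := mul_le_mul' hA1 hν2
  have hcinf : ℵ₀ ≤ c := hκ.trans ((cantor κ).le.trans (power_le_power_right hμ2))
  have hcc : c * c = c := mul_eq_self hcinf
  have hcκ : c ^ κ = c := by rw [hc, ← power_mul, mul_eq_self hκ]
  have hμc : #↥A * ν ≤ c := self_le_power _ (one_le_aleph0.trans hκ)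
  have hνc : ν ≤ c := le_trans (by calc ν = 1 * ν := (one_mul ν).symm
    _ ≤ #↥A * ν := mul_le_mul' hA1 le_rfl) hμc
  have hAc : #↥A ≤ c := le_trans (by calc #↥A = #↥A * 1 := (mul_one _).symm
    _ ≤ #↥A * ν := mul_le_mul' le_rfl (one_le_two.trans hν2)) hμc
  have hsucc : Order.succ κ ≤ c := (Order.succ_le_of_lt (cantor κ)).trans (power_le_power_right hμ2)
  set o := (Order.succ κ).ord with ho
  have hTcard : #o.ToType = Order.succ κ := by rw [mk_toType, ho, card_ord]
  have holim : Order.IsSuccLimit o := Cardinal.isSuccLimit_ord (hκ.trans (Order.le_succ κ))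
  haveI hTne : Nonempty o.ToType :=
    Ordinal.nonempty_toType_iff.mpr holim.pos.ne'
  have hAchain : ∀ i : o.ToType, A ⊆ chainB A i := fun i => by
    rw [chainB_eq]
    exact subset_union_left.trans (subset_thetaCl' _)
  have hcard : ∀ i : o.ToType, #↥(chainB A i) ≤ c := by
    intro i
    refine (IsWellFounded.wf (α := o.ToType) (r := (· < ·))).induction
      (C := fun i => #↥(chainB A i) ≤ c) i ?_
    intro i IH
    rw [chainB_eq]
    have hSle : #↥(A ∪ ⋃ j : {j : o.ToType // j < i}, chainB A j.1) ≤ c := by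
      refine (mk_union_le _ _).trans ?_
      have h1 : #↥(⋃ j : {j : o.ToType // j < i}, chainB A j.1) ≤ c := by
        refine mk_iUnion_le_sum_mk.trans ?_
        refine (sum_le_sum _ (fun _ => c) (fun (j : {j : o.ToType // j < i}) => IH j.1 j.2)).trans ?_
        rw [sum_const']
        calc #{j : o.ToType // j < i} * c ≤ c * c :=
              mul_le_mul' (((mk_subtype_le _).trans_eq hTcard).trans hsucc) le_rfl
          _ = c := hcc
      calc #↥A + #↥(⋃ j : {j : o.ToType // j < i}, chainB A j.1) ≤ c + c :=
            add_le_add hAc h1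
        _ = c := add_eq_self hcinf
    refine (thetaCl_card_le _ hκ V hVκ hVcl hVcof).trans ?_
    calc #↥(A ∪ ⋃ j : {j : o.ToType // j < i}, chainB A j.1) ^ κ * ν ≤ c ^ κ * c :=
          mul_le_mul' (power_le_power_right hSle) hνc
      _ = c := by rw [hcκ, hcc]
  set H := ⋃ i : o.ToType, chainB A i with hH
  have hHcard : #↥H ≤ c := by
    refine mk_iUnion_le_sum_mk.trans ?_
    refine (sum_le_sum _ (fun _ => c) hcard).trans ?_
    rw [sum_const']
    calc #o.ToType * c ≤ c * c := mul_le_mul' (hTcard.le.trans hsucc) le_rfl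
      _ = c := hcc
  have hHcl : thetaCl H = H := by
    refine Subset.antisymm ?_ (subset_thetaCl' H)
    intro x hx
    set K := κ.out with hKdef
    haveI : Nonempty ↥(V x) := by
      obtain ⟨W, hW, -⟩ := hVcof x univ isOpen_univ (mem_univ x)
      exact ⟨⟨W, hW⟩⟩
    obtain ⟨f⟩ := (Cardinal.le_def _ _).mp ((hVκ x).trans_eq (mk_out κ).symm)
    set e : K → ↥(V x) := Function.invFun f with he
    have hesurj : Function.Surjective e := Function.invFun_surjective f.injective
    have hpt : ∀ kk : K, ∃ p : X, ∃ i : o.ToType, p ∈ (e kk : Set X) ∧ p ∈ chainB A i := by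
      intro kk
      obtain ⟨p, hp1, hp2⟩ := closed_nhd_meets hx (hVcl x _ (e kk).2).1 (hVcl x _ (e kk).2).2
      obtain ⟨i, hi⟩ := mem_iUnion.mp hp2
      exact ⟨p, i, hp1, hi⟩
    choose p idx hp hpc using hpt
    have hbound : ∃ t : o.ToType, ∀ kk : K, idx kk < t := by
      set φ := Ordinal.ToType.mk (o := o) with hφ
      set β : K → Set.Iio o := fun kk => φ.symm (idx kk) with hβ
      set F : K → Ordinal.{u} := fun kk => Order.succ (β kk).1 with hF
      have hFlt : ∀ kk, F kk < o := fun kk => holim.succ_lt (β kk).2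
      have hcof : #K < o.cof := by
        rw [ho, (Cardinal.isRegular_succ hκ).cof_eq, hKdef, mk_out]
        exact Order.lt_succ κ
      have hsup : (⨆ kk, F kk) < o := Ordinal.iSup_lt_ord hcof hFlt
      refine ⟨φ ⟨_, hsup⟩, fun kk => ?_⟩
      have h1 : idx kk = φ (β kk) := (φ.apply_symm_apply (idx kk)).symm
      rw [h1]
      rw [φ.lt_iff_lt]
      show (β kk).1 < ⨆ kk, F kk
      exact lt_of_lt_of_le (Order.lt_succ _) (le_ciSup (Ordinal.bddAbove_range F) kk)
    obtain ⟨t, ht⟩ := hbound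
    have hxt : x ∈ chainB A t := by
      rw [chainB_eq]
      intro U hU hxU
      obtain ⟨W, hW, hWsub⟩ := hVcof x U hU hxU
      obtain ⟨kk, hkk⟩ := hesurj ⟨W, hW⟩
      have hpW : p kk ∈ W := by
        have := hp kk
        rw [hkk] at this
        exact this
      exact ⟨p kk, hWsub hpW, Or.inr (mem_iUnion.mpr ⟨⟨idx kk, ht kk⟩, hpc kk⟩)⟩
    exact mem_iUnion.mpr ⟨t, hxt⟩
  have hhull : thetaHull A ⊆ H := by
    refine sInter_subset_of_mem ⟨hHcl, fun a ha => ?_⟩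
    exact mem_iUnion.mpr ⟨Classical.arbitrary _, hAchain _ ha⟩
  exact (mk_le_mk_of_subset hhull).trans hHcard
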